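/- Perfect classification after enough rounds: in the AdaBoost setting with a uniform edge, if every round's weighted error satisfies ε_t ≤ 1/2 − γ for a fixed γ ∈ (0, 1/2) (and each ε_t ∈ (0,1)), and the number of rounds satisfies T > ln(N) / (2γ²), then the boosted classifier classifies every training example correctly, i.e., y_i·F(x_i) > 0 for all i = 1,…,N, where F(x) = Σ_{t=1}^{T} α_t h_t(x). -/

import Mathlib

/-- Perfect classification after enough rounds: in the AdaBoost setting with a
uniform edge, if every round's weighted error satisfies `ε_t ≤ 1/2 − γ` for a fixed
`γ ∈ (0, 1/2)` (and each `ε_t ∈ (0,1)`), and the number of rounds satisfies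
`T > ln(N) / (2γ²)`, then the boosted classifier classifies every training example
correctly: `yᵢ·F(xᵢ) > 0` for all `i`, where `F(x) = Σ_t α_t·h_t(x)`.
Setting: labels `yᵢ ∈ {−1,+1}`, weak hypotheses `h_t : X → {−1,+1}`, weights
`D_1(i) = 1/N` (indexed so `D 0 = D_1`),
`D_{t+1}(i) = D_t(i)·exp(−α_t·yᵢ·h_t(xᵢ))/Z_t` with
`Z_t = Σᵢ D_t(i)·exp(−α_t·yᵢ·h_t(xᵢ))`, weighted error
`ε_t = Σ_{i : h_t(xᵢ) ≠ yᵢ} D_t(i)`, and `α_t = (1/2)·ln((1−ε_t)/ε_t)`. -/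
theorem adaboost_perfect_classification {X : Type*} (N T : ℕ) (hN : 0 < N)
    (x : Fin N → X) (y : Fin N → ℝ) (hy : ∀ i, y i = 1 ∨ y i = -1)
    (h : Fin T → X → ℝ) (hh : ∀ t x', h t x' = 1 ∨ h t x' = -1)
    (α ε : Fin T → ℝ) (D : ℕ → Fin N → ℝ) (Z : Fin T → ℝ)
    (γ : ℝ) (hγ0 : 0 < γ) (hγ1 : γ < 1 / 2)
    (hD0 : ∀ i, D 0 i = 1 / N)
    (hZ : ∀ t : Fin T, Z t = ∑ i, D t.1 i * Real.exp (-(α t * y i * h t (x i))))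
    (hrec : ∀ (t : Fin T) (i : Fin N),
      D (t.1 + 1) i = D t.1 i * Real.exp (-(α t * y i * h t (x i))) / Z t)
    (hε : ∀ t : Fin T,
      ε t = ∑ i ∈ Finset.univ.filter (fun i => h t (x i) ≠ y i), D t.1 i)
    (hα : ∀ t, α t = (1 / 2) * Real.log ((1 - ε t) / ε t))
    (hε0 : ∀ t, 0 < ε t) (hε1 : ∀ t, ε t < 1)
    (hweak : ∀ t, ε t ≤ 1 / 2 - γ)
    (hT : Real.log N / (2 * γ ^ 2) < (T : ℝ)) :
    ∀ i, 0 < y i * ∑ t, α t * h t (x i) := by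

  have hNpos : (0:ℝ) < N := Nat.cast_pos.mpr hN
  have hne : (Finset.univ : Finset (Fin N)).Nonempty := by
    simpa [Finset.univ_nonempty_iff] using Fin.pos_iff_nonempty.mp hN
  -- positivity of D
  have Dpos : ∀ m, m ≤ T → ∀ i, 0 < D m i := by
    intro m
    induction m with
    | zero => intro _ i; rw [hD0]; positivity
    | succ m ih =>
      intro hm i
      have hmT : m < T := hm
      set t : Fin T := ⟨m, hmT⟩ with ht
      have hDm : ∀ j, 0 < D m j := ih (le_of_lt hmT)
      have hZpos : 0 < Z t := by
        rw [hZ t]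
        apply Finset.sum_pos _ hne
        intro j _
        exact mul_pos (hDm j) (Real.exp_pos _)
      have := hrec t i
      simp only [ht] at this
      rw [this]
      exact div_pos (mul_pos (hDm i) (Real.exp_pos _)) hZpos
  have Zpos : ∀ t : Fin T, 0 < Z t := by
    intro t
    rw [hZ t]
    apply Finset.sum_pos _ hne
    intro j _
    exact mul_pos (Dpos t.1 t.2.le j) (Real.exp_pos _)
  -- sums equal 1
  have Dsum : ∀ m, m ≤ T → (∑ i, D m i) = 1 := by
    intro m
    induction m with
    | zero =>
      intro _
      simp only [hD0]
      rw [Finset.sum_const, Finset.card_univ, Fintype.card_fin, nsmul_eq_mul]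
      field_simp
    | succ m ih =>
      intro hm
      have hmT : m < T := hm
      set t : Fin T := ⟨m, hmT⟩ with ht
      have hsum : (∑ i, D (m+1) i) = (∑ i, D m i * Real.exp (-(α t * y i * h t (x i)))) / Z t := by
        rw [Finset.sum_div]
        apply Finset.sum_congr rfl
        intro i _
        have := hrec t i
        simp only [ht] at this
        exact this
      rw [hsum, ← hZ t]
      exact div_self (ne_of_gt (Zpos t))
  -- unrolled formula
  have unroll : ∀ m, m ≤ T → ∀ i,
      D m i * ∏ t ∈ Finset.univ.filter (fun t : Fin T => t.1 < m), Z t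
        = (1 / N) * Real.exp (-(y i * ∑ t ∈ Finset.univ.filter (fun t : Fin T => t.1 < m), α t * h t (x i))) := by
    intro m
    induction m with
    | zero =>
      intro _ i
      simp [hD0 i]
    | succ m ih =>
      intro hm i
      have hmT : m < T := hm
      set t : Fin T := ⟨m, hmT⟩ with ht
      have hset : Finset.univ.filter (fun s : Fin T => s.1 < m + 1)
          = insert t (Finset.univ.filter (fun s : Fin T => s.1 < m)) := by
        ext s
        simp [Nat.lt_succ_iff_lt_or_eq, Fin.ext_iff, ht, or_comm]
        exact Nat.le_iff_lt_or_eq.trans or_comm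
      have hnotmem : t ∉ Finset.univ.filter (fun s : Fin T => s.1 < m) := by
        simp [ht]
      rw [hset, Finset.prod_insert hnotmem, Finset.sum_insert hnotmem]
      have hr := hrec t i
      simp only [ht] at hr
      rw [← ht] at hr
      have hZne : Z t ≠ 0 := ne_of_gt (Zpos t)
      have hih := ih (le_of_lt hmT) i
      have key : D m i * Real.exp (-(α t * y i * h t (x i))) / Z t *
          (Z t * ∏ s ∈ Finset.univ.filter (fun s : Fin T => s.1 < m), Z s)
          = (D m i * ∏ s ∈ Finset.univ.filter (fun s : Fin T => s.1 < m), Z s) *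
            Real.exp (-(α t * y i * h t (x i))) := by
        field_simp
      rw [hr, key, hih, mul_assoc, ← Real.exp_add]
      congr 2
      ring
  -- Z bound
  have Zbound : ∀ t : Fin T, Z t ≤ Real.exp (-(2 * γ ^ 2)) := by
    intro t
    have hεt0 := hε0 t
    have hεt1 := hε1 t
    have hεw := hweak t
    -- split sum
    have hsplit : Z t = (1 - ε t) * Real.exp (-(α t)) + ε t * Real.exp (α t) := by
      rw [hZ t]
      rw [← Finset.sum_filter_add_sum_filter_not Finset.univ (fun i => h t (x i) = y i)]
      have h1 : ∀ i ∈ Finset.univ.filter (fun i => h t (x i) = y i),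
          D t.1 i * Real.exp (-(α t * y i * h t (x i))) = D t.1 i * Real.exp (-(α t)) := by
        intro i hi
        simp only [Finset.mem_filter] at hi
        rcases hy i with h1 | h1 <;> rw [hi.2, h1] <;> ring_nf
      have h2 : ∀ i ∈ Finset.univ.filter (fun i => ¬ h t (x i) = y i),
          D t.1 i * Real.exp (-(α t * y i * h t (x i))) = D t.1 i * Real.exp (α t) := by
        intro i hi
        simp only [Finset.mem_filter] at hi
        rcases hy i with h1 | h1 <;> rcases hh t (x i) with h2 | h2 <;>
          first
          | (exfalso; rw [h1, h2] at hi; exact hi.2 rfl)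
          | (rw [h1, h2]; ring_nf)
      rw [Finset.sum_congr rfl h1, Finset.sum_congr rfl h2, ← Finset.sum_mul, ← Finset.sum_mul]
      have hsum1 : (∑ i ∈ Finset.univ.filter (fun i => h t (x i) = y i), D t.1 i)
          = 1 - ε t := by
        have htot := Dsum t.1 t.2.le
        have := Finset.sum_filter_add_sum_filter_not Finset.univ (fun i => h t (x i) = y i) (D t.1)
        rw [hε t]
        have hε' : (∑ i ∈ Finset.univ.filter (fun i => ¬ h t (x i) = y i), D t.1 i)
            = ∑ i ∈ Finset.univ.filter (fun i => h t (x i) ≠ y i), D t.1 i := rfl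
        linarith [this, htot]
      rw [hsum1, ← hε t]
    -- exp alpha
    set a := Real.exp (α t) with ha
    have hapos : 0 < a := Real.exp_pos _
    have ha2 : a ^ 2 = (1 - ε t) / ε t := by
      rw [sq, ha, ← Real.exp_add, hα t]
      rw [show (1:ℝ)/2 * Real.log ((1 - ε t)/ε t) + 1/2 * Real.log ((1 - ε t)/ε t)
          = Real.log ((1 - ε t)/ε t) by ring]
      exact Real.exp_log (div_pos (by linarith) hεt0)
    have hainv : Real.exp (-(α t)) = a⁻¹ := by rw [Real.exp_neg, ha]
    have hane : a ≠ 0 := ne_of_gt hapos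
    have ha2' : a ^ 2 * ε t = 1 - ε t := by
      rw [ha2, div_mul_cancel₀ _ (ne_of_gt hεt0)]
    have hZa : Z t * a = 2 * (1 - ε t) := by
      rw [hsplit, hainv]
      have e0 : ((1 - ε t) * a⁻¹ + ε t * a) * a
          = (1 - ε t) * (a⁻¹ * a) + ε t * a ^ 2 := by ring
      rw [e0, inv_mul_cancel₀ hane, mul_one]
      linear_combination ha2'
    have h1ε : (0:ℝ) < 1 - ε t := by linarith
    have hZsq : (Z t) ^ 2 = 4 * ε t * (1 - ε t) := by
      have e1 : Z t ^ 2 * a ^ 2 = 4 * (1 - ε t) ^ 2 := by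
        calc Z t ^ 2 * a ^ 2 = (Z t * a) ^ 2 := by ring
          _ = (2 * (1 - ε t)) ^ 2 := by rw [hZa]
          _ = 4 * (1 - ε t) ^ 2 := by ring
      have e2 : Z t ^ 2 * (1 - ε t) = (4 * ε t * (1 - ε t)) * (1 - ε t) := by
        linear_combination ε t * e1 - Z t ^ 2 * ha2'
      exact mul_right_cancel₀ (ne_of_gt h1ε) e2
    have hZpos := Zpos t
    have hE : (0:ℝ) < Real.exp (-(2 * γ ^ 2)) := Real.exp_pos _
    have hEsq : (Real.exp (-(2 * γ ^ 2))) ^ 2 = Real.exp (-(4 * γ ^ 2)) := by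
      rw [sq, ← Real.exp_add]
      congr 1
      ring
    have hbound : (Z t) ^ 2 ≤ (Real.exp (-(2 * γ ^ 2))) ^ 2 := by
      rw [hZsq, hEsq]
      have h1 : 4 * ε t * (1 - ε t) ≤ 1 - 4 * γ ^ 2 := by nlinarith
      have h2 : 1 - 4 * γ ^ 2 ≤ Real.exp (-(4 * γ ^ 2)) := by
        have := Real.add_one_le_exp (-(4 * γ ^ 2))
        linarith
      linarith
    nlinarith [hbound, hZpos, hE, sq_nonneg (Z t - Real.exp (-(2 * γ ^ 2)))]
  -- product bound
  have hprod : (∏ t : Fin T, Z t) < 1 / N := by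
    have h1 : (∏ t : Fin T, Z t) ≤ Real.exp (-(2 * γ ^ 2)) ^ T := by
      calc (∏ t : Fin T, Z t) ≤ ∏ _t : Fin T, Real.exp (-(2 * γ ^ 2)) :=
            Finset.prod_le_prod (fun t _ => (Zpos t).le) (fun t _ => Zbound t)
        _ = Real.exp (-(2 * γ ^ 2)) ^ T := by
            simp [Finset.prod_const]
    have h2 : Real.exp (-(2 * γ ^ 2)) ^ T = Real.exp (-(2 * γ ^ 2) * T) := by
      rw [← Real.exp_nat_mul]
      congr 1
      ring
    have h3 : Real.exp (-(2 * γ ^ 2) * T) < 1 / N := by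
      rw [lt_div_iff₀ hNpos]
      rw [← Real.exp_log hNpos, ← Real.exp_add]
      have : Real.log N < 2 * γ ^ 2 * T := by
        have hg : (0:ℝ) < 2 * γ ^ 2 := by positivity
        rw [div_lt_iff₀ hg] at hT
        linarith [hT]
      calc Real.exp (-(2 * γ ^ 2) * ↑T + Real.log ↑N)
          < Real.exp 0 := by
            apply Real.exp_lt_exp.mpr; linarith
        _ = 1 := Real.exp_zero
    calc (∏ t : Fin T, Z t) ≤ Real.exp (-(2 * γ ^ 2)) ^ T := h1
      _ = Real.exp (-(2 * γ ^ 2) * T) := h2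
      _ < 1 / N := h3
  -- finish
  intro i
  by_contra hcon
  push_neg at hcon
  have hfullfilter : Finset.univ.filter (fun t : Fin T => t.1 < T) = Finset.univ := by
    apply Finset.filter_true_of_mem
    intro t _; exact t.2
  have hun := unroll T le_rfl i
  rw [hfullfilter] at hun
  have hDT1 : D T i ≤ 1 := by
    rw [← Dsum T le_rfl]
    exact Finset.single_le_sum (fun j _ => (Dpos T le_rfl j).le) (Finset.mem_univ i)
  have hexp1 : (1:ℝ) ≤ Real.exp (-(y i * ∑ t, α t * h t (x i))) := by
    apply Real.one_le_exp
    linarith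
  have : (1:ℝ) / N ≤ ∏ t : Fin T, Z t := by
    have h1N : (0:ℝ) < 1 / N := by positivity
    calc (1:ℝ)/N ≤ (1/N) * Real.exp (-(y i * ∑ t, α t * h t (x i))) := by
          nlinarith [hexp1, h1N]
      _ = D T i * ∏ t : Fin T, Z t := hun.symm
      _ ≤ 1 * ∏ t : Fin T, Z t := by
          apply mul_le_mul_of_nonneg_right hDT1
          exact Finset.prod_nonneg (fun t _ => (Zpos t).le)
      _ = ∏ t : Fin T, Z t := one_mul _
  linarith
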